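/- Let G be a directed acyclic graph with a topological order π, and suppose an edge (u,v) with π(u) > π(v) is inserted such that the resulting graph G' = G + (u,v) is still acyclic. Let W = {w : π(v) ≤ π(w) ≤ π(u)}, let T ⊆ W be the vertices of W reachable from v in G (including v), and let S ⊆ W be the vertices of W that can reach u in G (including u). Then in G': (1) no vertex of T can reach any vertex of S, (2) no vertex of T can reach any vertex of Z := W \ (S ∪ T), and (3) no vertex of Z can reach any vertex of S. -/

import Mathlib

/-- After inserting an edge `(u,v)` with `π u > π v` into a DAG with
topological order `π` (keeping the graph acyclic), with `W` the vertices whose labels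
lie between `π v` and `π u`, `T ⊆ W` the vertices reachable from `v` (in the old graph),
`S ⊆ W` the vertices that reach `u` (in the old graph), and `Z = W \ (S ∪ T)`:
no vertex of `T` reaches a vertex of `S`, no vertex of `T` reaches a vertex of `Z`,
and no vertex of `Z` reaches a vertex of `S`, in the new graph. -/
theorem insertion_S_Z_T_non_reachability
    {V : Type*} (E : V → V → Prop) (π : V → ℕ)
    (hinj : Function.Injective π)
    (htopo : ∀ x y, E x y → π x < π y)
    (u v : V) (huv : π v < π u)
    (E' : V → V → Prop) (hE' : ∀ x y, E' x y ↔ (E x y ∨ (x = u ∧ y = v)))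
    (hacyc : ∀ w : V, ¬ Relation.TransGen E' w w)
    (W S T Z : Set V)
    (hW : W = {w | π v ≤ π w ∧ π w ≤ π u})
    (hT : T = {w ∈ W | Relation.ReflTransGen E v w})
    (hS : S = {w ∈ W | Relation.ReflTransGen E w u})
    (hZ : Z = W \ (S ∪ T)) :
    (∀ t ∈ T, ∀ a ∈ S, ¬ Relation.ReflTransGen E' t a) ∧
    (∀ t ∈ T, ∀ z ∈ Z, ¬ Relation.ReflTransGen E' t z) ∧
    (∀ z ∈ Z, ∀ a ∈ S, ¬ Relation.ReflTransGen E' z a) := by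
  have hEuv : E' u v := (hE' u v).mpr (Or.inr ⟨rfl, rfl⟩)
  have hsub : ∀ x y, E x y → E' x y := fun x y h => (hE' x y).mpr (Or.inl h)
  have hlift : ∀ {x y}, Relation.ReflTransGen E x y → Relation.ReflTransGen E' x y :=
    fun h => Relation.ReflTransGen.mono (fun a b => hsub a b) _ _ h
  have hnovu : ¬ Relation.ReflTransGen E' v u := fun h =>
    hacyc u (Relation.TransGen.head' hEuv h)
  have split : ∀ x y, Relation.ReflTransGen E' x y →
      Relation.ReflTransGen E x y ∨
      (Relation.ReflTransGen E' x u ∧ Relation.ReflTransGen E' v y) := by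
    intro x y h
    induction h with
    | refl => exact Or.inl Relation.ReflTransGen.refl
    | tail _ e ih =>
      rcases (hE' _ _).mp e with he | ⟨rfl, rfl⟩
      · rcases ih with h1 | ⟨p, q⟩
        · exact Or.inl (h1.tail he)
        · exact Or.inr ⟨p, q.tail (hsub _ _ he)⟩
      · rcases ih with h1 | ⟨p, _⟩
        · exact Or.inr ⟨hlift h1, Relation.ReflTransGen.refl⟩
        · exact Or.inr ⟨p, Relation.ReflTransGen.refl⟩
  subst hW hT hS hZ
  refine ⟨?_, ?_, ?_⟩
  · rintro t ⟨_, hvt⟩ a ⟨_, hau⟩ h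
    exact hnovu (((hlift hvt).trans h).trans (hlift hau))
  · rintro t ⟨htW, hvt⟩ z ⟨hzW, hz⟩ h
    rcases split v z ((hlift hvt).trans h) with h1 | ⟨p, _⟩
    · exact hz (Or.inr ⟨hzW, h1⟩)
    · exact hnovu p
  · rintro z ⟨hzW, hz⟩ a ⟨_, hau⟩ h
    rcases split z a h with h1 | ⟨_, q⟩
    · exact hz (Or.inl ⟨hzW, h1.trans hau⟩)
    · exact hnovu (q.trans (hlift hau))
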